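/- Let D be a triangulated category, σ = (Z, P) a stability condition, and E an object admitting an HN filtration with factors A₁ ∈ P(φ₁), …, A_l ∈ P(φ_l), φ₁ > ⋯ > φ_l, l ≥ 2. Then there exists k with 2 ≤ k ≤ l and Hom(A_k, A₁[1]) ≠ 0, provided E is indecomposable; consequently gldim σ ≥ φ₁ + 1 − φ_k > 1. -/

import Mathlib

open CategoryTheory CategoryTheory.Limits CategoryTheory.Pretriangulated

universe v u

variable (C : Type u) [Category.{v} C] [Preadditive C] [HasZeroObject C]
  [HasShift C ℤ] [∀ n : ℤ, (shiftFunctor C n).Additive] [Pretriangulated C]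
  [HasFiniteBiproducts C]

/-- A Bridgeland stability condition, encoded by a central charge on objects and a slicing. -/
structure StabilityCondition where
  Z : C → ℂ
  P : ℝ → Set C
  mem_of_iso : ∀ {φ : ℝ} {E F : C}, (E ≅ F) → E ∈ P φ → F ∈ P φ
  charge : ∀ {φ : ℝ} {E : C}, E ∈ P φ → ¬ IsZero E →
    ∃ m : ℝ, 0 < m ∧ Z E = (m : ℂ) * Complex.exp (Real.pi * φ * Complex.I)
  shift_mem : ∀ (φ : ℝ) (E : C), E ∈ P φ ↔ E⟦(1 : ℤ)⟧ ∈ P (φ + 1)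
  sum_mem : ∀ {φ : ℝ} {X Y : C}, X ∈ P φ → Y ∈ P φ → (X ⊞ Y) ∈ P φ
  summand_mem : ∀ {φ : ℝ} {X Y : C}, (X ⊞ Y) ∈ P φ → X ∈ P φ
  hom_zero : ∀ {φ₁ φ₂ : ℝ}, φ₂ < φ₁ → ∀ {E F : C}, E ∈ P φ₁ → F ∈ P φ₂ →
    ∀ f : E ⟶ F, f = 0
  HN : ∀ E : C, ¬ IsZero E → ∃ (n : ℕ) (obj : Fin (n + 1) → C) (φ : Fin n → ℝ),
    IsZero (obj 0) ∧ Nonempty (obj (Fin.last n) ≅ E) ∧ StrictAnti φ ∧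
    ∀ i : Fin n, ∃ (A : C) (f : obj i.castSucc ⟶ obj i.succ) (g : obj i.succ ⟶ A)
      (h : A ⟶ (obj i.castSucc)⟦(1 : ℤ)⟧),
      (Triangle.mk f g h ∈ distTriang C) ∧ A ∈ P (φ i) ∧ ¬ IsZero A

variable {C}

/-- `E` is semistable iff it lies in some slice. -/
def StabilityCondition.IsSemistable (σ : StabilityCondition C) (E : C) : Prop :=
  ∃ φ : ℝ, E ∈ σ.P φ

/-- The global dimension of a stability condition. -/
noncomputable def StabilityCondition.gldim (σ : StabilityCondition C) : EReal :=
  sSup {d : EReal | ∃ (φ₁ φ₂ : ℝ) (E F : C) (f : E ⟶ F),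
    E ∈ σ.P φ₁ ∧ F ∈ σ.P φ₂ ∧ f ≠ 0 ∧ d = ((φ₂ - φ₁ : ℝ) : EReal)}

/-- An object is indecomposable if it is nonzero and any biproduct decomposition is trivial. -/
def IsIndec (E : C) : Prop :=
  ¬ IsZero E ∧ ∀ (X Y : C), (E ≅ X ⊞ Y) → IsZero X ∨ IsZero Y

/-- `E` is stable of phase `φ`: it is a nonzero object of `P(φ)` admitting no nontrivial
extension decomposition inside `P(φ)` (i.e. it is simple in the abelian category `P(φ)`). -/
def StabilityCondition.IsStableOfPhase (σ : StabilityCondition C) (E : C) (φ : ℝ) : Prop :=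
  E ∈ σ.P φ ∧ ¬ IsZero E ∧ ∀ (A B : C) (f : A ⟶ E) (g : E ⟶ B) (h : B ⟶ A⟦(1 : ℤ)⟧),
    (Triangle.mk f g h ∈ distTriang C) → A ∈ σ.P φ → B ∈ σ.P φ →
    ¬ IsZero A → ¬ IsZero B → False

/-- The Krull–Schmidt property: every nonzero object is a finite biproduct of indecomposables. -/
def KrullSchmidt : Prop :=
  ∀ X : C, ¬ IsZero X → ∃ (m : ℕ) (f : Fin m → C),
    (∀ i, IsIndec (f i)) ∧ Nonempty (X ≅ ⨁ f)


section AuxLemmas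

lemma aux_hom_zero_of_iso {X X' Y Y' : C} (eX : X ≅ X') (eY : Y ≅ Y')
    (h : ∀ v : X' ⟶ Y', v = 0) (u : X ⟶ Y) : u = 0 := by
  have h1 : u = eX.hom ≫ (eX.inv ≫ u ≫ eY.hom) ≫ eY.inv := by simp
  rw [h1, h (eX.inv ≫ u ≫ eY.hom), zero_comp, comp_zero]

lemma aux_hom_zero_of_shift {X Y : C}
    (h : ∀ v : X⟦(1 : ℤ)⟧ ⟶ Y⟦(1 : ℤ)⟧, v = 0) (u : X ⟶ Y) : u = 0 := by
  rw [← (shiftFunctor C (1 : ℤ)).map_eq_zero_iff]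
  exact h _

lemma aux_split_triangle_iso (T : Triangle C) (hT : T ∈ distTriang C)
    (r : T.obj₂ ⟶ T.obj₁) (hr : T.mor₁ ≫ r = 𝟙 T.obj₁) :
    Nonempty (T.obj₂ ≅ T.obj₁ ⊞ T.obj₃) := by
  have hw : T.mor₃ = 0 := by
    have h1 : T.mor₃ ≫ T.mor₁⟦(1 : ℤ)⟧' = 0 := comp_distTriang_mor_zero₃₁ T hT
    calc T.mor₃ = T.mor₃ ≫ (T.mor₁ ≫ r)⟦(1 : ℤ)⟧' := by rw [hr]; simp
    _ = (T.mor₃ ≫ T.mor₁⟦(1 : ℤ)⟧') ≫ r⟦(1 : ℤ)⟧' := by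
        rw [Functor.map_comp, Category.assoc]
    _ = 0 := by rw [h1, zero_comp]
  let ψ : T ⟶ binaryBiproductTriangle T.obj₁ T.obj₃ :=
    { hom₁ := 𝟙 _
      hom₂ := biprod.lift r T.mor₂
      hom₃ := 𝟙 _
      comm₁ := by
        apply biprod.hom_ext
        · erw [Category.assoc, biprod.lift_fst, hr, Category.id_comp, biprod.inl_fst]
        · erw [Category.assoc, biprod.lift_snd, comp_distTriang_mor_zero₁₂ T hT, Category.id_comp, biprod.inl_snd]
      comm₂ := by exact (Category.comp_id _).trans (biprod.lift_snd _ _).symm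
      comm₃ := by rw [hw]; exact zero_comp.trans comp_zero.symm }
  have : IsIso ψ.hom₂ :=
    isIso₂_of_isIso₁₃ ψ hT (binaryBiproductTriangle_distinguished _ _)
      (by dsimp [ψ]; exact IsIso.id _) (by dsimp [ψ]; exact IsIso.id _)
  exact ⟨@asIso _ _ _ _ ψ.hom₂ this⟩

end AuxLemmas

/-- If an indecomposable object `E` admits an HN filtration with `l ≥ 2` factors
`A_i ∈ P(φ_i)`, `φ₁ > ⋯ > φ_l`, then some `Hom(A_k, A₁[1]) ≠ 0` with `k ≥ 2`;
consequently `gldim σ ≥ φ₁ + 1 - φ_k > 1`. -/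
theorem gldim_gt_one_of_indec_with_long_HN (σ : StabilityCondition C)
    (E : C) (hE : IsIndec E) (n : ℕ) (hn : 2 ≤ n)
    (obj : Fin (n + 1) → C) (A : Fin n → C) (φ : Fin n → ℝ)
    (h0 : IsZero (obj 0)) (hlast : Nonempty (obj (Fin.last n) ≅ E))
    (hanti : StrictAnti φ)
    (htri : ∀ i : Fin n, ∃ (f : obj i.castSucc ⟶ obj i.succ) (g : obj i.succ ⟶ A i)
      (w : A i ⟶ (obj i.castSucc)⟦(1 : ℤ)⟧), (Triangle.mk f g w ∈ distTriang C))
    (hA : ∀ i : Fin n, A i ∈ σ.P (φ i) ∧ ¬ IsZero (A i)) :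
    ∃ k : Fin n, (⟨0, by omega⟩ : Fin n) < k ∧
      (∃ g : A k ⟶ (A ⟨0, by omega⟩)⟦(1 : ℤ)⟧, g ≠ 0) ∧
      ((φ ⟨0, by omega⟩ + 1 - φ k : ℝ) : EReal) ≤ σ.gldim ∧
      (1 : EReal) < σ.gldim := by
  obtain ⟨eE⟩ := hlast
  choose f g w hdist using htri
  have hn1 : 0 < n := by omega
  set i0 : Fin n := ⟨0, by omega⟩ with hi0def
  -- the zeroth object of the filtration is zero
  have hcast0 : i0.castSucc = (0 : Fin (n + 1)) := by ext; simp [hi0def]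
  have hzero0 : IsZero (obj i0.castSucc) := by rw [hcast0]; exact h0
  -- obj 1 ≅ A 0
  have hIso2 : IsIso (g i0) :=
    ((Triangle.mk (f i0) (g i0) (w i0)).isZero₁_iff_isIso₂ (hdist i0)).1 hzero0
  let e1 : obj i0.succ ≅ A i0 := asIso (g i0)
  have hA0ne : ¬ IsZero (obj i0.succ) := fun hz => (hA i0).2 (hz.of_iso e1.symm)
  -- main claim
  have key : ∃ k : Fin n, i0 < k ∧ ∃ gg : A k ⟶ (A i0)⟦(1 : ℤ)⟧, gg ≠ 0 := by
    by_contra hcon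
    push_neg at hcon
    -- every map (A j)⟦-1⟧ ⟶ obj i0.succ vanishes, for j > 0
    have homObj1 : ∀ j : Fin n, i0 < j → ∀ u : (A j)⟦(-1 : ℤ)⟧ ⟶ obj i0.succ, u = 0 := by
      intro j hj u
      apply aux_hom_zero_of_shift
      intro v
      exact aux_hom_zero_of_iso
        ((shiftFunctorCompIsoId C (-1 : ℤ) (1 : ℤ) (by ring)).app (A j))
        ((shiftFunctor C (1 : ℤ)).mapIso e1) (hcon j hj) v
    -- build a retraction of obj i0.succ in each obj j, by induction
    have retr : ∀ j : ℕ, ∀ hj : j < n + 1, 1 ≤ j →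
        ∃ (s : obj i0.succ ⟶ obj ⟨j, hj⟩) (r : obj ⟨j, hj⟩ ⟶ obj i0.succ),
          s ≫ r = 𝟙 (obj i0.succ) := by
      intro j
      induction j with
      | zero => intro _ h1; omega
      | succ m ih =>
        intro hj h1
        by_cases hm : m = 0
        · subst hm
          refine ⟨𝟙 _, 𝟙 _, Category.id_comp _⟩
        · have hm1 : 1 ≤ m := by omega
          obtain ⟨s, r, hsr⟩ := ih (by omega) hm1
          set i : Fin n := ⟨m, by omega⟩ with hidef
          have hmor : ((Triangle.mk (f i) (g i) (w i)).invRotate).mor₁ ≫ r = 0 := by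
            apply homObj1 i (by simp [hi0def, hidef, Fin.lt_def]; omega)
          obtain ⟨r', hr'⟩ := Triangle.yoneda_exact₂ _
            (inv_rot_of_distTriang _ (hdist i)) r hmor
          refine ⟨s ≫ f i, r', ?_⟩
          have : f i ≫ r' = r := hr'.symm
          erw [Category.assoc, this, hsr]
    obtain ⟨s, r, hsr⟩ := retr n (by omega) (by omega)
    -- form the cone of s and split
    obtain ⟨B, p, wb, hTb⟩ := distinguished_cocone_triangle s
    obtain ⟨e2⟩ := aux_split_triangle_iso _ hTb r hsr
    have hlastn : (Fin.last n : Fin (n + 1)) = ⟨n, by omega⟩ := rfl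
    have heEB : E ≅ obj i0.succ ⊞ B := eE.symm ≪≫ e2
    rcases hE.2 _ _ heEB with h1 | hB
    · exact hA0ne h1
    -- so s is an isomorphism and E ∈ P (φ i0)
    have hsiso : IsIso s :=
      ((Triangle.mk s p wb).isZero₃_iff_isIso₁ hTb).1 hB
    have hEP : E ∈ σ.P (φ i0) :=
      σ.mem_of_iso (e1.symm ≪≫ asIso s ≪≫ eE) (hA i0).1
    -- vanishing of maps out of obj j into low phases
    have claim : ∀ j : ℕ, ∀ hj : j < n + 1, 1 ≤ j → ∀ (X : C) (ψ : ℝ), X ∈ σ.P ψ →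
        ψ < φ ⟨j - 1, by omega⟩ → ∀ u : obj ⟨j, hj⟩ ⟶ X, u = 0 := by
      intro j
      induction j with
      | zero => intro _ h1; omega
      | succ m ih =>
        intro hj h1 X ψ hX hψ u
        by_cases hm : m = 0
        · subst hm
          exact aux_hom_zero_of_iso e1 (Iso.refl X)
            (σ.hom_zero hψ (hA i0).1 hX) u
        · have hm1 : 1 ≤ m := by omega
          set i : Fin n := ⟨m, by omega⟩ with hidef
          have hψ' : ψ < φ ⟨m - 1, by omega⟩ := by
            refine lt_trans hψ (hanti ?_)
            simp [hidef, Fin.lt_def]; omega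
          have hfu : f i ≫ u = 0 := ih (by omega) hm1 X ψ hX hψ' (f i ≫ u)
          obtain ⟨v, hv⟩ := Triangle.yoneda_exact₂ _ (hdist i) u hfu
          have hv0 : v = 0 := σ.hom_zero hψ (hA i).1 hX v
          rw [hv, hv0, comp_zero]; rfl
    -- final contradiction using the last triangle
    set i1 : Fin n := ⟨n - 1, by omega⟩ with hi1def
    have hi1succ : i1.succ = Fin.last n := by ext; simp [hi1def]; omega
    have hg0 : g i1 = 0 := by
      have h01 : i0 < i1 := by simp [hi0def, hi1def, Fin.lt_def]; omega
      have hmem : obj i1.succ ∈ σ.P (φ i0) := by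
        rw [hi1succ]; exact σ.mem_of_iso eE.symm hEP
      exact σ.hom_zero (hanti h01) hmem (hA i1).1 (g i1)
    obtain ⟨u, hu⟩ := Triangle.yoneda_exact₂ _
      (rot_of_distTriang _ (hdist i1)) (𝟙 (A i1)) (by exact (Category.comp_id _).trans hg0)
    have humem : (A i1)⟦(-1 : ℤ)⟧ ∈ σ.P (φ i1 - 1) := by
      apply (σ.shift_mem (φ i1 - 1) ((A i1)⟦(-1 : ℤ)⟧)).2
      have : ((A i1)⟦(-1 : ℤ)⟧)⟦(1 : ℤ)⟧ ∈ σ.P (φ i1) :=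
        σ.mem_of_iso ((shiftFunctorCompIsoId C (-1 : ℤ) (1 : ℤ) (by ring)).app
          (A i1)).symm (hA i1).1
      rwa [sub_add_cancel]
    have hu0 : u = 0 := by
      rw [← (shiftFunctor C (-1 : ℤ)).map_eq_zero_iff]
      refine aux_hom_zero_of_iso
        ((shiftFunctorCompIsoId C (1 : ℤ) (-1 : ℤ) (by ring)).app (obj i1.castSucc))
        (Iso.refl _) ?_ _
      intro v
      refine claim (n - 1) (by omega) (by omega) ((A i1)⟦(-1 : ℤ)⟧) (φ i1 - 1)
        humem ?_ v
      have : φ i1 < φ ⟨n - 1 - 1, by omega⟩ := hanti (by simp [hi1def, Fin.lt_def]; omega)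
      linarith
    have : 𝟙 (A i1) = 0 := by
      rw [hu] at *
      rw [hu0, comp_zero]; rfl
    exact (hA i1).2 ((Limits.IsZero.iff_id_eq_zero (A i1)).2 this)
  -- conclude
  obtain ⟨k, hk, gg, hgg⟩ := key
  have hmem2 : (A i0)⟦(1 : ℤ)⟧ ∈ σ.P (φ i0 + 1) := (σ.shift_mem _ _).1 (hA i0).1
  have hle : ((φ i0 + 1 - φ k : ℝ) : EReal) ≤ σ.gldim := by
    apply le_sSup
    exact ⟨φ k, φ i0 + 1, A k, (A i0)⟦(1 : ℤ)⟧, gg, (hA k).1, hmem2, hgg, by norm_num⟩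
  have hφ : φ k < φ i0 := hanti hk
  have hgt : (1 : EReal) < ((φ i0 + 1 - φ k : ℝ) : EReal) := by
    rw [show (1 : EReal) = ((1 : ℝ) : EReal) by norm_num, EReal.coe_lt_coe_iff]
    linarith
  exact ⟨k, hk, ⟨gg, hgg⟩, hle, lt_of_lt_of_le hgt hle⟩
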